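/- arXiv:math/0209209 — 2 statements merged into one kernel-verified Lean document; each statement's English description precedes it below -/
import Mathlib

section
/- In the braid group B_n with Artin generators σ_1,...,σ_{n-1}, the band generators a_{t,s} := (σ_{t-1} σ_{t-2} ⋯ σ_{s+1}) σ_s (σ_{s+1}^{-1} ⋯ σ_{t-2}^{-1} σ_{t-1}^{-1}) for 1 ≤ s < t ≤ n satisfy a_{t,s} a_{s,r} = a_{t,r} a_{t,s} for all 1 ≤ r < s < t ≤ n. -/
def braidRels (n : ℕ) : Set (FreeGroup (Fin (n - 1))) :=
  {r | (∃ i j : Fin (n - 1), (i : ℕ) + 1 < (j : ℕ) ∧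
        r = FreeGroup.of i * FreeGroup.of j * (FreeGroup.of i)⁻¹ * (FreeGroup.of j)⁻¹) ∨
       (∃ i j : Fin (n - 1), (i : ℕ) + 1 = (j : ℕ) ∧
        r = FreeGroup.of i * FreeGroup.of j * FreeGroup.of i *
            (FreeGroup.of j * FreeGroup.of i * FreeGroup.of j)⁻¹)}

def BraidGroup (n : ℕ) : Type := PresentedGroup (braidRels n)

instance (n : ℕ) : Group (BraidGroup n) := by unfold BraidGroup; infer_instance

def braidGen {n : ℕ} (i : ℕ) : BraidGroup n :=
  if h : 1 ≤ i ∧ i < n then PresentedGroup.of (⟨i - 1, by omega⟩ : Fin (n - 1)) else 1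

def bandWord {n : ℕ} (t s : ℕ) : BraidGroup n :=
  (((List.range (t - 1 - s)).map (fun k => braidGen (n := n) (t - 1 - k))).prod)

def band {n : ℕ} (t s : ℕ) : BraidGroup n :=
  bandWord t s * braidGen s * (bandWord t s)⁻¹

lemma braid_rel_one {n : ℕ} {w : FreeGroup (Fin (n-1))} (h : w ∈ braidRels n) :
    (PresentedGroup.mk (braidRels n) w : BraidGroup n) = 1 :=
  (QuotientGroup.eq_one_iff _).mpr (Subgroup.subset_normalClosure h)

lemma braid_comm {n : ℕ} {i j : ℕ} (h : i + 1 < j) :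
    Commute (braidGen (n := n) i) (braidGen (n := n) j) := by
  unfold braidGen
  by_cases hi : 1 ≤ i ∧ i < n <;> by_cases hj : 1 ≤ j ∧ j < n
  · erw [dif_pos hi, dif_pos hj]
    obtain ⟨hi1, hi2⟩ := hi; obtain ⟨hj1, hj2⟩ := hj
    set a : Fin (n-1) := ⟨i - 1, by omega⟩
    set b : Fin (n-1) := ⟨j - 1, by omega⟩
    have hmem : (FreeGroup.of a * FreeGroup.of b * (FreeGroup.of a)⁻¹ * (FreeGroup.of b)⁻¹)
        ∈ braidRels n := Or.inl ⟨a, b, by simp [a, b]; omega, rfl⟩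
    have h1 := braid_rel_one hmem
    have h2 : (PresentedGroup.of a : BraidGroup n) * PresentedGroup.of b *
        (PresentedGroup.of a)⁻¹ * (PresentedGroup.of b)⁻¹ = 1 := by
      simpa [PresentedGroup.of] using h1
    unfold Commute SemiconjBy
    rw [mul_inv_eq_one, mul_inv_eq_iff_eq_mul] at h2
    exact h2
  · erw [dif_pos hi, dif_neg hj]
    exact Commute.one_right _
  · erw [dif_neg hi, dif_pos hj]
    exact Commute.one_left _
  · erw [dif_neg hi, dif_neg hj]

lemma bandWord_step {n t r : ℕ} (h : r + 1 < t) :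
    bandWord (n := n) t r = bandWord t (r+1) * braidGen (r+1) := by
  unfold bandWord
  have h1 : t - 1 - r = (t - 1 - (r+1)) + 1 := by omega
  rw [h1, List.range_succ, List.map_append, List.prod_append]
  have h2 : t - 1 - (t - 1 - (r+1)) = r + 1 := by omega
  simp [h2]

lemma bandWord_step_top {n s r : ℕ} (h : r < s) :
    bandWord (n := n) (s+1) r = braidGen s * bandWord s r := by
  unfold bandWord
  have h1 : s + 1 - 1 - r = 1 + (s - 1 - r) := by omega
  rw [h1, List.range_add, List.map_append, List.prod_append, List.map_map]
  have hhead : List.range 1 = [0] := by simp [List.range_succ]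
  rw [hhead]
  simp only [List.map_cons, List.map_nil, List.prod_cons, List.prod_nil, mul_one,
    Nat.sub_zero, Nat.add_sub_cancel]
  congr 1
  apply congrArg List.prod
  apply List.map_congr_left
  intro k _
  simp only [Function.comp]
  congr 1
  omega

lemma bandWord_split {n : ℕ} {r s t : ℕ} (h2 : r < s) (h3 : s < t) :
    bandWord (n := n) t r = bandWord t s * braidGen s * bandWord s r := by
  induction s with
  | zero => omega
  | succ m ih =>
    have e1 : bandWord (n := n) t m = bandWord t (m+1) * braidGen (m+1) :=
      bandWord_step (by omega)
    rcases Nat.lt_or_ge r m with hr | hr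
    · have e3 : bandWord (n := n) (m+1) r = braidGen m * bandWord m r :=
        bandWord_step_top hr
      rw [ih hr (by omega), e1, e3]
      group
    · have hrm : r = m := by omega
      subst hrm
      have e2 : bandWord (n := n) (r+1) r = 1 := by
        unfold bandWord; simp
      rw [bandWord_step (t := t) (by omega), e2, mul_one]

lemma comm_bandWord {n : ℕ} {a : BraidGroup n} {t s : ℕ}
    (h : ∀ i, s + 1 ≤ i → i ≤ t - 1 → Commute a (braidGen (n := n) i)) :
    Commute a (bandWord (n := n) t s) := by
  unfold bandWord
  apply Commute.list_prod_right
  intro y hy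
  simp only [List.mem_map, List.mem_range] at hy
  obtain ⟨k, hk, rfl⟩ := hy
  exact h _ (by omega) (by omega)

lemma band_comm_gen {n : ℕ} {r s j : ℕ} (h2 : r < s) (hj : s + 1 ≤ j) :
    Commute (band (n := n) s r) (braidGen (n := n) j) := by
  unfold band
  have c1 : Commute (bandWord (n := n) s r) (braidGen (n := n) j) := by
    apply (comm_bandWord (a := braidGen (n := n) j) ?_).symm
    intro i hi1 hi2
    exact (braid_comm (by omega)).symm
  have c2 : Commute (braidGen (n := n) r) (braidGen (n := n) j) :=
    braid_comm (by omega)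
  exact (c1.mul_left c2).mul_left c1.inv_left

theorem stmt6 {n : ℕ} (r s t : ℕ) (h1 : 1 ≤ r) (h2 : r < s) (h3 : s < t) (h4 : t ≤ n) :
    band (n := n) t s * band s r = band t r * band t s := by
  have hB : Commute (band (n := n) s r) (bandWord (n := n) t s) := by
    apply comm_bandWord
    intro i hi1 hi2
    exact band_comm_gen h2 hi1
  have hsplit := bandWord_split (n := n) h2 h3
  set W := bandWord (n := n) t s with hW
  set X := braidGen (n := n) s with hX
  have hts : band (n := n) t s = W * X * W⁻¹ := rfl
  have key : band (n := n) t r = W * X * band s r * X⁻¹ * W⁻¹ := by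
    simp only [band, hsplit]
    group
  rw [hts, key]
  calc W * X * W⁻¹ * band s r = W * X * (band s r * W⁻¹) := by
        rw [mul_assoc, ← hB.inv_right.eq]
    _ = W * X * band (n := n) s r * X⁻¹ * W⁻¹ * (W * X * W⁻¹) := by group
end

section
/- In the braid group B_n, the band generators satisfy a_{t,r} a_{t,s} = a_{s,r} a_{t,r} for all 1 ≤ r < s < t ≤ n. -/
lemma rel_eq_one {n : ℕ} {r : FreeGroup (Fin (n - 1))} (h : r ∈ braidRels n) :
    PresentedGroup.mk (braidRels n) r = 1 :=
  (QuotientGroup.eq_one_iff r).mpr (Subgroup.subset_normalClosure h)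

lemma braidGen_comm {n : ℕ} {i j : ℕ} (h : i + 2 ≤ j) :
    Commute (braidGen (n := n) i) (braidGen j) := by
  unfold braidGen
  by_cases hi : 1 ≤ i ∧ i < n
  · by_cases hj : 1 ≤ j ∧ j < n
    · erw [dif_pos hi, dif_pos hj]
      set a : BraidGroup n := PresentedGroup.of (⟨i - 1, by omega⟩ : Fin (n - 1)) with ha
      set b : BraidGroup n := PresentedGroup.of (⟨j - 1, by omega⟩ : Fin (n - 1)) with hb
      have hr : (FreeGroup.of (⟨i-1, by omega⟩ : Fin (n-1)) * FreeGroup.of (⟨j-1, by omega⟩ : Fin (n-1)) * (FreeGroup.of (⟨i-1, by omega⟩ : Fin (n-1)))⁻¹ * (FreeGroup.of (⟨j-1, by omega⟩ : Fin (n-1)))⁻¹) ∈ braidRels n :=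
        Or.inl ⟨⟨i-1, by omega⟩, ⟨j-1, by omega⟩, by simp; omega, rfl⟩
      have h1 := rel_eq_one hr
      simp only [map_mul, map_inv] at h1
      have h2 : (a * b) * (b * a)⁻¹ = 1 := by
        rw [mul_inv_rev, ← mul_assoc]; exact h1
      exact mul_inv_eq_one.mp h2
    · erw [dif_neg hj]; exact Commute.one_right _
  · erw [dif_neg hi]; exact Commute.one_left _

lemma braidGen_braid {n : ℕ} {i : ℕ} (h1 : 1 ≤ i) (h2 : i + 1 < n) :
    braidGen (n := n) i * braidGen (i+1) * braidGen i
      = braidGen (i+1) * braidGen i * braidGen (i+1) := by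
  unfold braidGen
  erw [dif_pos (⟨h1, by omega⟩ : 1 ≤ i ∧ i < n), dif_pos (⟨by omega, h2⟩ : 1 ≤ i + 1 ∧ i + 1 < n)]
  set a : BraidGroup n := PresentedGroup.of (⟨i - 1, by omega⟩ : Fin (n - 1)) with ha
  set b : BraidGroup n := PresentedGroup.of (⟨i + 1 - 1, by omega⟩ : Fin (n - 1)) with hb
  have hr : (FreeGroup.of (⟨i-1, by omega⟩ : Fin (n-1)) * FreeGroup.of (⟨i+1-1, by omega⟩ : Fin (n-1)) * FreeGroup.of (⟨i-1, by omega⟩ : Fin (n-1)) * (FreeGroup.of (⟨i+1-1, by omega⟩ : Fin (n-1)) * FreeGroup.of (⟨i-1, by omega⟩ : Fin (n-1)) * FreeGroup.of (⟨i+1-1, by omega⟩ : Fin (n-1)))⁻¹) ∈ braidRels n :=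
    Or.inr ⟨⟨i-1, by omega⟩, ⟨i+1-1, by omega⟩, by simp; omega, rfl⟩
  have h3 := rel_eq_one hr
  simp only [map_mul, map_inv] at h3
  exact mul_inv_eq_one.mp h3

lemma bandWord_eq_one {n t s : ℕ} (h : t ≤ s + 1) : bandWord (n := n) t s = 1 := by
  unfold bandWord
  have : t - 1 - s = 0 := by omega
  rw [this]; simp

lemma bandWord_succ {n t s : ℕ} (h : s + 1 < t) :
    bandWord (n := n) t s = braidGen (t-1) * bandWord (t-1) s := by
  unfold bandWord
  have h1 : t - 1 - s = (t - 1 - 1 - s) + 1 := by omega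
  rw [h1, List.range_succ_eq_map]
  simp only [List.map_cons, List.prod_cons, List.map_map, Nat.sub_zero]
  congr 1
  congr 1
  apply List.map_congr_left
  intro k hk
  simp only [Function.comp_apply]
  congr 1
  omega

lemma band_top {n t : ℕ} : band (n := n) t (t-1) = braidGen (t-1) := by
  unfold band
  rw [bandWord_eq_one (by omega)]
  simp

lemma band_succ {n t r : ℕ} (h : r + 1 < t) :
    band (n := n) t r = braidGen (t-1) * band (t-1) r * (braidGen (t-1))⁻¹ := by
  unfold band
  rw [bandWord_succ h, mul_inv_rev]
  group

lemma commute_bandWord {n t s j : ℕ} (h : t + 1 ≤ j) :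
    Commute (bandWord (n := n) t s) (braidGen j) := by
  induction t with
  | zero => rw [bandWord_eq_one (by omega)]; exact Commute.one_left _
  | succ t ih =>
    by_cases ht : t + 1 ≤ s + 1
    · rw [bandWord_eq_one ht]; exact Commute.one_left _
    · rw [bandWord_succ (by omega : s + 1 < t + 1)]
      simp only [Nat.add_sub_cancel]
      exact Commute.mul_left (braidGen_comm (by omega)) (ih (by omega))

lemma commute_band {n s r j : ℕ} (h1 : s + 1 ≤ j) (h2 : r + 2 ≤ j) :
    Commute (band (n := n) s r) (braidGen j) := by
  unfold band
  have hw : Commute (bandWord (n := n) s r) (braidGen j) := commute_bandWord (by omega)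
  exact Commute.mul_left (Commute.mul_left hw (braidGen_comm h2)) hw.inv_left

lemma key_group {G : Type*} [Group G] (a b X : G)
    (h1 : a*b*a = b*a*b) (h2 : X*b = b*X) (h3 : a*X*a = X*a*X) :
    b*(a*X*a⁻¹)*b = (a*X*a⁻¹)*b*(a*X*a⁻¹) := by
  have h1a : a*(b*a) = b*(a*b) := by simpa only [mul_assoc] using h1
  have hba0 : a⁻¹*(b*a) = b*(a*b⁻¹) := by
    have e : a⁻¹*(b*a)*b = b*(a*b⁻¹)*b := by
      simp only [mul_assoc, inv_mul_cancel, mul_one]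
      rw [← h1a, ← mul_assoc, inv_mul_cancel, one_mul]
    exact mul_right_cancel e
  have hba' : ∀ y : G, a⁻¹*(b*(a*y)) = b*(a*(b⁻¹*y)) := by
    intro y
    calc a⁻¹*(b*(a*y)) = (a⁻¹*(b*a))*y := by simp only [mul_assoc]
      _ = (b*(a*b⁻¹))*y := by rw [hba0]
      _ = b*(a*(b⁻¹*y)) := by simp only [mul_assoc]
  have h2' : ∀ y : G, X*(b*y) = b*(X*y) := by
    intro y; rw [← mul_assoc, h2, mul_assoc]
  have hb0 : b⁻¹*X = X*b⁻¹ := ((show Commute X b from h2).inv_right.eq).symm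
  have h1' : ∀ y : G, a*(b*(a*y)) = b*(a*(b*y)) := by
    intro y
    calc a*(b*(a*y)) = (a*(b*a))*y := by simp only [mul_assoc]
      _ = (b*(a*b))*y := by rw [h1a]
      _ = b*(a*(b*y)) := by simp only [mul_assoc]
  have h3' : ∀ y : G, a*(X*(a*y)) = X*(a*(X*y)) := by
    intro y
    have h3a : a*(X*a) = X*(a*X) := by simpa only [mul_assoc] using h3
    calc a*(X*(a*y)) = (a*(X*a))*y := by simp only [mul_assoc]
      _ = (X*(a*X))*y := by rw [h3a]
      _ = X*(a*(X*y)) := by simp only [mul_assoc]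
  apply mul_right_cancel (b := a)
  simp only [mul_assoc, inv_mul_cancel_left, inv_mul_cancel, mul_one]
  -- LHS : b*(a*(X*(a⁻¹*(b*a))))   RHS : a*(X*(a⁻¹*(b*(a*X))))
  rw [hba0, h2', ← h1', hba', h2', hb0, ← h3']

lemma braid_band {n s r : ℕ} (h1 : 1 ≤ r) (h2 : r < s) (h3 : s < n) :
    braidGen (n := n) s * band s r * braidGen s
      = band s r * braidGen s * band s r := by
  induction s with
  | zero => omega
  | succ s ih =>
    by_cases hr : r = s
    · subst hr
      rw [show band (n := n) (r+1) r = braidGen r by simpa using band_top (n := n) (t := r+1)]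
      exact (braidGen_braid h1 h3).symm
    · have hrs : r < s := by omega
      rw [band_succ (show r + 1 < s + 1 by omega)]
      simp only [Nat.add_sub_cancel]
      exact key_group (braidGen s) (braidGen (s+1)) (band s r)
        (braidGen_braid (by omega) h3)
        (commute_band (le_refl (s+1)) (by omega))
        (ih hrs (by omega))

theorem stmt7 {n : ℕ} (r s t : ℕ) (h1 : 1 ≤ r) (h2 : r < s) (h3 : s < t) (h4 : t ≤ n) :
    band (n := n) t r * band t s = band s r * band t r := by
  induction t with
  | zero => omega
  | succ t ih =>
    by_cases hst : s = t
    · subst hst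
      rw [show band (n := n) (s+1) s = braidGen s by simpa using band_top (n := n) (t := s+1)]
      rw [band_succ (show r + 1 < s + 1 by omega)]
      simp only [Nat.add_sub_cancel]
      have hb := braid_band (n := n) h1 h2 (by omega)
      calc braidGen (n := n) s * band s r * (braidGen s)⁻¹ * braidGen s
          = braidGen s * band s r := by group
        _ = band s r * braidGen s * band s r * (braidGen s)⁻¹ := by
            rw [← hb]; group
        _ = band s r * (braidGen s * band s r * (braidGen s)⁻¹) := by group
    · have hst' : s < t := by omega
      rw [band_succ (show r + 1 < t + 1 by omega), band_succ (show s + 1 < t + 1 by omega)]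
      simp only [Nat.add_sub_cancel]
      have hc : Commute (band (n := n) s r) (braidGen t) := commute_band (by omega) (by omega)
      have ih' := ih hst' (by omega)
      calc braidGen (n := n) t * band t r * (braidGen t)⁻¹ * (braidGen t * band t s * (braidGen t)⁻¹)
          = braidGen t * (band t r * band t s) * (braidGen t)⁻¹ := by group
        _ = braidGen t * (band s r * band t r) * (braidGen t)⁻¹ := by rw [ih']
        _ = (braidGen t * band s r) * (band t r * (braidGen t)⁻¹) := by group
        _ = (band s r * braidGen t) * (band t r * (braidGen t)⁻¹) := by rw [← hc.eq]
        _ = band s r * (braidGen t * band t r * (braidGen t)⁻¹) := by group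
end
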